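/- arXiv:2203.03358 — 6 statements merged into one kernel-verified Lean document; each statement's English description precedes it below -/
import Mathlib

section
/- Let G be a graph, r ∈ ℕ, S ⊆ V(G), L_S a linear ordering of S, and L a full right extension of L_S. Then wcol_r(G, L) ≥ wcol_r(G, L_S), where wcol_r(G, L_S) is defined as the maximum over all v ∈ V(G) of the number of vertices u such that either u = v, or u ∈ S and there is a path of length at most r from v to u all of whose vertices in S come at or after u in L_S. -/
open SimpleGraph

variable {V : Type*} [DecidableEq V]

/-- `u ∈ Wfull G r L v` iff `u` is weakly `r`-reachable from `v` w.r.t. the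
full vertex ordering given by the list `L`. -/
def Wfull (G : SimpleGraph V) (r : ℕ) (L : List V) (v : V) : Set V :=
  {u | ∃ p : G.Walk v u, p.IsPath ∧ p.length ≤ r ∧ ∀ w ∈ p.support, L.idxOf u ≤ L.idxOf w}

/-- Weak `r`-reachability w.r.t. a subordering `L` (a list of a subset of the vertices):
`u = v`, or `u` is ordered and there is a path of length at most `r` between `u` and `v`
all of whose ordered vertices come at or after `u`. -/
def Wsub (G : SimpleGraph V) (r : ℕ) (L : List V) (v : V) : Set V :=
  {u | u = v ∨ (u ∈ L ∧ ∃ p : G.Walk v u, p.IsPath ∧ p.length ≤ r ∧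
      ∀ w ∈ p.support, w ∈ L → L.idxOf u ≤ L.idxOf w)}

/-- The weak `r`-coloring number of the full ordering `L`. -/
noncomputable def wcolFull (G : SimpleGraph V) [Fintype V] (r : ℕ) (L : List V) : ℕ :=
  Finset.univ.sup fun v => (Wfull G r L v).ncard

/-- The weak `r`-coloring number of a subordering `L`. -/
noncomputable def wcolSub (G : SimpleGraph V) [Fintype V] (r : ℕ) (L : List V) : ℕ :=
  Finset.univ.sup fun v => (Wsub G r L v).ncard

/-- The weak `r`-coloring number of `G`: minimum over all full orderings. -/
noncomputable def wcolG (G : SimpleGraph V) [Fintype V] (r : ℕ) : ℕ :=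
  sInf {k | ∃ L : List V, L.Nodup ∧ (∀ x, x ∈ L) ∧ wcolFull G r L = k}

theorem stmt2 [Fintype V] (G : SimpleGraph V) (r : ℕ) (LS L : List V)
    (hLS : LS.Nodup) (hL : L.Nodup) (hfull : ∀ x, x ∈ L)
    (hext : ∃ t : List V, L = LS ++ t) :
    wcolSub G r LS ≤ wcolFull G r L := by
  obtain ⟨t, rfl⟩ := hext
  unfold wcolSub wcolFull
  apply Finset.sup_le
  intro v _
  have hsub : Wsub G r LS v ⊆ Wfull G r (LS ++ t) v := by
    intro u hu
    rcases hu with rfl | ⟨huLS, p, hp, hlen, hmin⟩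
    · exact ⟨SimpleGraph.Walk.nil, SimpleGraph.Walk.IsPath.nil, Nat.zero_le r, by
        intro w hw
        simp only [SimpleGraph.Walk.support_nil, List.mem_singleton] at hw
        subst hw; exact le_rfl⟩
    · refine ⟨p, hp, hlen, ?_⟩
      intro w hw
      rw [List.idxOf_append_of_mem huLS]
      by_cases hwLS : w ∈ LS
      · rw [List.idxOf_append_of_mem hwLS]
        exact hmin w hw hwLS
      · rw [List.idxOf_append_of_notMem hwLS]
        have : List.idxOf u LS < LS.length := List.idxOf_lt_length_iff.mpr huLS
        omega
  calc (Wsub G r LS v).ncard ≤ (Wfull G r (LS ++ t) v).ncard :=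
        Set.ncard_le_ncard hsub (Set.toFinite _)
    _ ≤ Finset.univ.sup (fun v => (Wfull G r (LS ++ t) v).ncard) :=
        Finset.le_sup (f := fun v => (Wfull G r (LS ++ t) v).ncard) (Finset.mem_univ v)
end

section
/- Let G be a graph, r ∈ ℕ, L_S = (s_1, …, s_n) a subordering of S ⊆ V(G), and v ∈ V(G)\S. Let L_{S∪{v}} be any linear ordering of S ∪ {v} whose restriction to S equals L_S. Then Wreach_r(G, L_{S∪{v}}, v) \ {v} = { s ∈ bp(G, L_S, v) : s ⪯_{L_{S∪{v}}} v }, where bp(G, L_S, v) is the set of breakpoints of v, i.e., vertices s ∈ S such that Wreach_r(G, placebefore(L_S, s, v), v) ≠ Wreach_r(G, placeafter(L_S, s, v), v). -/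
open SimpleGraph

variable {V : Type*} [DecidableEq V]

/-- Insert `v` immediately before `s` in the list `L`. -/
def placeBefore (L : List V) (s v : V) : List V :=
  L.takeWhile (· != s) ++ v :: L.dropWhile (· != s)

/-- Insert `v` immediately after `s` in the list `L`. -/
def placeAfter (L : List V) (s v : V) : List V :=
  L.takeWhile (· != s) ++ s :: v :: (L.dropWhile (· != s)).tail

/-- The set of breakpoints of `v` w.r.t. the subordering `L`. -/
def bp (G : SimpleGraph V) (r : ℕ) (L : List V) (v : V) : Set V :=
  {s | s ∈ L ∧ Wsub G r (placeBefore L s v) v ≠ Wsub G r (placeAfter L s v) v}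

lemma idx_le_iff (A B : List V) (v a b : V) (hvA : v ∉ A) (hvB : v ∉ B)
    (ha : a ∈ A ++ B) (hb : b ∈ A ++ B) :
    (A ++ v :: B).idxOf a ≤ (A ++ v :: B).idxOf b ↔
      (A ++ B).idxOf a ≤ (A ++ B).idxOf b := by
  have hav : a ≠ v := by rintro rfl; rcases List.mem_append.1 ha with h | h <;> [exact hvA h; exact hvB h]
  have hbv : b ≠ v := by rintro rfl; rcases List.mem_append.1 hb with h | h <;> [exact hvA h; exact hvB h]
  by_cases haA : a ∈ A <;> by_cases hbA : b ∈ A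
  · rw [List.idxOf_append_of_mem haA, List.idxOf_append_of_mem hbA,
      List.idxOf_append_of_mem haA, List.idxOf_append_of_mem hbA]
  · have hla : List.idxOf a A < A.length := List.idxOf_lt_length_iff.2 haA
    rw [List.idxOf_append_of_mem haA, List.idxOf_append_of_notMem hbA,
      List.idxOf_append_of_mem haA, List.idxOf_append_of_notMem hbA]
    omega
  · have hlb : List.idxOf b A < A.length := List.idxOf_lt_length_iff.2 hbA
    rw [List.idxOf_append_of_notMem haA, List.idxOf_append_of_mem hbA,
      List.idxOf_append_of_notMem haA, List.idxOf_append_of_mem hbA,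
      List.idxOf_cons_ne _ (Ne.symm hav)]
    omega
  · rw [List.idxOf_append_of_notMem haA, List.idxOf_append_of_notMem hbA,
      List.idxOf_append_of_notMem haA, List.idxOf_append_of_notMem hbA,
      List.idxOf_cons_ne _ (Ne.symm hav), List.idxOf_cons_ne _ (Ne.symm hbv)]
    omega

lemma idx_le_v_iff (A B : List V) (v u : V) (hvA : v ∉ A) (hvB : v ∉ B)
    (hu : u ∈ A ++ B) :
    (A ++ v :: B).idxOf u ≤ (A ++ v :: B).idxOf v ↔ u ∈ A := by
  have huv : u ≠ v := by rintro rfl; rcases List.mem_append.1 hu with h | h <;> [exact hvA h; exact hvB h]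
  have hv : (A ++ v :: B).idxOf v = A.length := by
    rw [List.idxOf_append_of_notMem hvA, List.idxOf_cons_self]; omega
  by_cases huA : u ∈ A
  · have : List.idxOf u A < A.length := List.idxOf_lt_length_iff.2 huA
    rw [List.idxOf_append_of_mem huA, hv]
    exact iff_of_true (le_of_lt this) huA
  · rw [List.idxOf_append_of_notMem huA, hv, List.idxOf_cons_ne _ (Ne.symm huv)]
    exact iff_of_false (by omega) huA

def Pcond (G : SimpleGraph V) (r : ℕ) (L : List V) (v u : V) : Prop :=
  ∃ p : G.Walk v u, p.IsPath ∧ p.length ≤ r ∧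
    ∀ w ∈ p.support, w ∈ L → L.idxOf u ≤ L.idxOf w

lemma master (G : SimpleGraph V) (r : ℕ) (A B : List V) (v : V)
    (hvA : v ∉ A) (hvB : v ∉ B) :
    Wsub G r (A ++ v :: B) v \ {v} = {u | u ∈ A ∧ Pcond G r (A ++ B) v u} := by
  ext u
  simp only [Wsub, Set.mem_diff, Set.mem_setOf_eq, Set.mem_singleton_iff, Pcond]
  constructor
  · rintro ⟨hW, huv⟩
    rcases hW with rfl | ⟨huN, p, hp, hlen, hord⟩
    · exact absurd rfl huv
    have huAB : u ∈ A ++ B := by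
      rcases List.mem_append.1 huN with h | h
      · exact List.mem_append.2 (Or.inl h)
      · rcases List.mem_cons.1 h with rfl | h
        · exact absurd rfl huv
        · exact List.mem_append.2 (Or.inr h)
    have hvN : v ∈ A ++ v :: B := by simp
    have huA : u ∈ A :=
      (idx_le_v_iff A B v u hvA hvB huAB).1 (hord v p.start_mem_support hvN)
    refine ⟨huA, p, hp, hlen, fun w hw hwAB => ?_⟩
    have hwN : w ∈ A ++ v :: B := by
      rcases List.mem_append.1 hwAB with h | h
      · exact List.mem_append.2 (Or.inl h)
      · exact List.mem_append.2 (Or.inr (List.mem_cons.2 (Or.inr h)))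
    exact (idx_le_iff A B v u w hvA hvB huAB hwAB).1 (hord w hw hwN)
  · rintro ⟨huA, p, hp, hlen, hord⟩
    have huv : u ≠ v := fun h => hvA (h ▸ huA)
    have huAB : u ∈ A ++ B := List.mem_append.2 (Or.inl huA)
    refine ⟨Or.inr ⟨List.mem_append.2 (Or.inl huA), p, hp, hlen, fun w hw hwN => ?_⟩, huv⟩
    have : w = v ∨ w ∈ A ++ B := by
      rcases List.mem_append.1 hwN with h | h
      · exact Or.inr (List.mem_append.2 (Or.inl h))
      · rcases List.mem_cons.1 h with rfl | h
        · exact Or.inl rfl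
        · exact Or.inr (List.mem_append.2 (Or.inr h))
    rcases this with rfl | hwAB
    · exact (idx_le_v_iff A B w u hvA hvB huAB).2 huA
    · exact (idx_le_iff A B v u w hvA hvB huAB hwAB).2 (hord w hw hwAB)

lemma v_mem_Wsub (G : SimpleGraph V) (r : ℕ) (L : List V) (v : V) : v ∈ Wsub G r L v :=
  Or.inl rfl

lemma bp_eq (G : SimpleGraph V) (r : ℕ) (LS : List V) (hLS : LS.Nodup)
    (v : V) (hv : v ∉ LS) :
    bp G r LS v = {s | s ∈ LS ∧ Pcond G r LS v s} := by
  ext s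
  simp only [bp, Set.mem_setOf_eq]
  refine and_congr_right fun hs => ?_
  -- decompose LS around s
  have hne : LS.dropWhile (· != s) ≠ [] := by
    intro h
    have := List.dropWhile_eq_nil_iff.mp h s hs
    simp at this
  have hhead : (LS.dropWhile (· != s)).head hne = s := by
    have := List.head_dropWhile_not (· != s) (l := LS) hne
    simpa using this
  obtain ⟨D, hD⟩ : ∃ D, LS.dropWhile (· != s) = s :: D := by
    refine ⟨(LS.dropWhile (· != s)).tail, ?_⟩
    conv_lhs => rw [← List.cons_head_tail hne]
    rw [hhead]
  set T := LS.takeWhile (· != s) with hT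
  have hLSeq : T ++ s :: D = LS := by
    rw [hT, ← hD]; exact List.takeWhile_append_dropWhile
  have hnd : (T ++ s :: D).Nodup := hLSeq ▸ hLS
  have hnd' := List.nodup_middle.1 hnd
  have hsT : s ∉ T := fun h => (List.nodup_cons.1 hnd').1 (List.mem_append.2 (Or.inl h))
  have hsD : s ∉ D := fun h => (List.nodup_cons.1 hnd').1 (List.mem_append.2 (Or.inr h))
  have hvT : v ∉ T := fun h => hv (hLSeq ▸ List.mem_append.2 (Or.inl h))
  have hvD : v ∉ D := fun h => hv (hLSeq ▸ List.mem_append.2 (Or.inr (List.mem_cons.2 (Or.inr h))))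
  have hvs : v ≠ s := fun h => hv (h ▸ hs)
  have hpb : placeBefore LS s v = T ++ v :: (s :: D) := by
    rw [placeBefore, hD]
  have hpa : placeAfter LS s v = (T ++ [s]) ++ v :: D := by
    rw [placeAfter, hD]; simp [hT]
  have hS1 : Wsub G r (placeBefore LS s v) v \ {v}
      = {u | u ∈ T ∧ Pcond G r LS v u} := by
    rw [hpb, master G r T (s :: D) v hvT (by simp [hvs, hvD]), hLSeq]
  have hS2 : Wsub G r (placeAfter LS s v) v \ {v}
      = {u | u ∈ T ++ [s] ∧ Pcond G r LS v u} := by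
    rw [hpa, master G r (T ++ [s]) D v (by simp [hvs, hvT]) hvD,
      List.append_assoc, List.singleton_append, hLSeq]
  constructor
  · intro hne'
    by_contra hP
    apply hne'
    have : Wsub G r (placeBefore LS s v) v \ {v} = Wsub G r (placeAfter LS s v) v \ {v} := by
      rw [hS1, hS2]
      ext u
      simp only [Set.mem_setOf_eq, List.mem_append, List.mem_singleton]
      constructor
      · rintro ⟨h1, h2⟩; exact ⟨Or.inl h1, h2⟩
      · rintro ⟨h1, h2⟩
        rcases h1 with h1 | rfl
        · exact ⟨h1, h2⟩
        · exact absurd h2 hP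
    have h1 := Set.insert_diff_singleton (a := v) (s := Wsub G r (placeBefore LS s v) v)
    have h2 := Set.insert_diff_singleton (a := v) (s := Wsub G r (placeAfter LS s v) v)
    rw [Set.insert_eq_self.2 (v_mem_Wsub G r _ v)] at h1
    rw [Set.insert_eq_self.2 (v_mem_Wsub G r _ v)] at h2
    rw [← h1, ← h2, this]
  · intro hP heq
    have : s ∈ Wsub G r (placeAfter LS s v) v \ {v} := by
      rw [hS2]; exact ⟨List.mem_append.2 (Or.inr (List.mem_singleton.2 rfl)), hP⟩
    rw [← heq, hS1] at this
    exact hsT this.1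

theorem stmt3 (G : SimpleGraph V) (r : ℕ) (LS : List V) (hLS : LS.Nodup)
    (v : V) (hv : v ∉ LS) (M : List V) (hM : M.Nodup) (hvM : v ∈ M)
    (hres : M.erase v = LS) :
    Wsub G r M v \ {v} = {s | s ∈ bp G r LS v ∧ M.idxOf s ≤ M.idxOf v} := by
  obtain ⟨A, B, hvA, hMeq, hMer⟩ := List.exists_erase_eq hvM
  have hLSeq : LS = A ++ B := by rw [← hres, hMer]
  subst hMeq hLSeq
  have hvB : v ∉ B := fun h => hv (List.mem_append.2 (Or.inr h))
  rw [master G r A B v hvA hvB, bp_eq G r (A ++ B) hLS v hv]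
  ext s
  simp only [Set.mem_setOf_eq]
  constructor
  · rintro ⟨hsA, hP⟩
    have hsAB : s ∈ A ++ B := List.mem_append.2 (Or.inl hsA)
    exact ⟨⟨hsAB, hP⟩, (idx_le_v_iff A B v s hvA hvB hsAB).2 hsA⟩
  · rintro ⟨⟨hsAB, hP⟩, hle⟩
    exact ⟨(idx_le_v_iff A B v s hvA hvB hsAB).1 hle, hP⟩
end

section
/- Let G be a graph, r ∈ ℕ, L_S a subordering of S ⊆ V(G), and v ∈ V(G)\S. Then a vertex s ∈ S is not a breakpoint of v (i.e., s ∉ bp(G, L_S, v)) if and only if for every vertex u ∈ V(G), Wreach_r(G, placebefore(L_S, s, v), u) = Wreach_r(G, placeafter(L_S, s, v), u). -/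
open SimpleGraph

variable {V : Type*} [DecidableEq V]

private lemma dropWhile_eq_cons {s : V} :
    ∀ {l : List V}, s ∈ l → l.dropWhile (· != s) = s :: (l.dropWhile (· != s)).tail := by
  intro l hl
  induction l with
  | nil => cases hl
  | cons a t ih =>
    by_cases ha : a = s
    · subst ha; simp [List.dropWhile_cons]
    · have h1 : (a != s) = true := by simpa using ha
      simp only [List.dropWhile_cons, h1, if_true]
      exact ih (by rcases List.mem_cons.mp hl with h | h
                   · exact absurd h.symm ha
                   · exact h)

private lemma wsub_all (G : SimpleGraph V) (r : ℕ) (A B : List V) (v s : V)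
    (hnd : (v :: (A ++ s :: B)).Nodup)
    (H : Wsub G r (A ++ v :: s :: B) v = Wsub G r (A ++ s :: v :: B) v)
    (u : V) : Wsub G r (A ++ v :: s :: B) u = Wsub G r (A ++ s :: v :: B) u := by
  set n := A.length with hn
  set Lb := A ++ v :: s :: B with hLb
  set La := A ++ s :: v :: B with hLa
  have hvs : v ≠ s := by
    rcases List.nodup_cons.mp hnd with ⟨hv1, _⟩
    intro h; exact hv1 (by simp [h])
  have hvA : v ∉ A := by
    rcases List.nodup_cons.mp hnd with ⟨hv1, _⟩
    intro h; exact hv1 (by simp [h])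
  have hsA : s ∉ A := by
    rcases List.nodup_cons.mp hnd with ⟨_, h2⟩
    intro h
    exact (List.disjoint_of_nodup_append h2) h (by simp)
  have hpermb : List.Perm Lb (v :: (A ++ s :: B)) := List.perm_middle
  have hperma : List.Perm La (v :: (A ++ s :: B)) := by
    have : List.Perm ((A ++ [s]) ++ v :: B) (v :: ((A ++ [s]) ++ B)) := List.perm_middle
    simpa using this
  have hbnd : Lb.Nodup := hpermb.nodup_iff.mpr hnd
  have hand : La.Nodup := hperma.nodup_iff.mpr hnd
  have hmem : ∀ x : V, x ∈ Lb ↔ x ∈ La := fun x => by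
    rw [hpermb.mem_iff, hperma.mem_iff]
  have hvLb : v ∈ Lb := by simp [hLb]
  have hsLb : s ∈ Lb := by simp [hLb]
  have hvLa : v ∈ La := by simp [hLa]
  have hsLa : s ∈ La := by simp [hLa]
  have ibv : Lb.idxOf v = n := by
    rw [hLb, List.idxOf_append_of_notMem hvA, List.idxOf_cons_self]
    all_goals omega
  have ibs : Lb.idxOf s = n + 1 := by
    rw [hLb, List.idxOf_append_of_notMem hsA, List.idxOf_cons_ne _ hvs,
      List.idxOf_cons_self]
    all_goals omega
  have iav : La.idxOf v = n + 1 := by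
    rw [hLa, List.idxOf_append_of_notMem hvA, List.idxOf_cons_ne _ hvs.symm,
      List.idxOf_cons_self]
    all_goals omega
  have ias : La.idxOf s = n := by
    rw [hLa, List.idxOf_append_of_notMem hsA, List.idxOf_cons_self]
    all_goals omega
  have ieq : ∀ x : V, x ≠ v → x ≠ s → Lb.idxOf x = La.idxOf x := by
    intro x hxv hxs
    by_cases hA : x ∈ A
    · rw [hLb, hLa, List.idxOf_append_of_mem hA, List.idxOf_append_of_mem hA]
    · rw [hLb, hLa, List.idxOf_append_of_notMem hA, List.idxOf_append_of_notMem hA,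
        List.idxOf_cons_ne _ (Ne.symm hxv), List.idxOf_cons_ne _ (Ne.symm hxs),
        List.idxOf_cons_ne _ (Ne.symm hxs), List.idxOf_cons_ne _ (Ne.symm hxv)]
  have hbne : ∀ {x y : V}, x ∈ Lb → y ∈ Lb → x ≠ y → Lb.idxOf x ≠ Lb.idxOf y :=
    fun hx hy hxy h => hxy ((List.idxOf_inj hx).mp h)
  have hane : ∀ {x y : V}, x ∈ La → y ∈ La → x ≠ y → La.idxOf x ≠ La.idxOf y :=
    fun hx hy hxy h => hxy ((List.idxOf_inj hx).mp h)
  -- comparison transfer for elements different from v and s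
  have hcmp : ∀ x w : V, x ∈ Lb → w ∈ Lb → x ≠ v → x ≠ s →
      (Lb.idxOf x ≤ Lb.idxOf w ↔ La.idxOf x ≤ La.idxOf w) := by
    intro x w hx hw hxv hxs
    have hk := ieq x hxv hxs
    by_cases hwv : w = v
    · have h1 : Lb.idxOf x ≠ n + 1 := by rw [← ibs]; exact hbne hx hsLb hxs
      rw [hwv, ibv, iav, ← hk]; omega
    · by_cases hws : w = s
      · have h1 : Lb.idxOf x ≠ n + 1 := by rw [← ibs]; exact hbne hx hsLb hxs
        rw [hws, ibs, ias, ← hk]; omega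
      · rw [ieq w hwv hws, hk]
  -- the key hypothesis-driven fact: no good short path from v to s
  have hkey : ∀ (p : G.Walk v s), p.IsPath → p.length ≤ r →
      ¬ (∀ w ∈ p.support, w ∈ Lb → n ≤ Lb.idxOf w) := by
    intro p hp hl hcond
    have hsmem : s ∈ Wsub G r La v := by
      refine Or.inr ⟨hsLa, p, hp, hl, fun w hw hwL => ?_⟩
      rw [ias]
      have hb := hcond w hw ((hmem w).mpr hwL)
      by_cases hwv : w = v
      · rw [hwv, iav]; omega
      · by_cases hws : w = s
        · rw [hws, ias]
        · rw [← ieq w hwv hws]; exact hb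
    rw [← H] at hsmem
    rcases hsmem with h | ⟨_, q, hq, hql, hqc⟩
    · exact hvs h.symm
    · have := hqc v q.start_mem_support hvLb
      rw [ibs, ibv] at this; omega
  -- main extensionality
  ext x
  simp only [Wsub, Set.mem_setOf_eq]
  constructor
  · rintro (rfl | ⟨hxL, p, hp, hpl, hpc⟩)
    · exact Or.inl rfl
    right
    refine ⟨(hmem x).mp hxL, ?_⟩
    by_cases hxv : x = v
    · subst hxv
      by_cases hsp : s ∈ p.support
      · exfalso
        refine hkey (p.dropUntil s hsp).reverse ((hp.dropUntil hsp).reverse)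
          (by rw [Walk.length_reverse]; exact le_trans (Walk.length_dropUntil_le p hsp) hpl)
          (fun w hw hwL => ?_)
        rw [Walk.support_reverse, List.mem_reverse] at hw
        have := hpc w (Walk.support_dropUntil_subset p hsp hw) hwL
        rwa [ibv] at this
      · refine ⟨p, hp, hpl, fun w hw hwL => ?_⟩
        rw [iav]
        by_cases hwv : w = x
        · rw [hwv, iav]
        · have hws : w ≠ s := fun h => hsp (h ▸ hw)
          have h1 := hpc w hw ((hmem w).mpr hwL)
          rw [ibv] at h1
          have h2 : Lb.idxOf w ≠ n := by rw [← ibv]; exact hbne ((hmem w).mpr hwL) hvLb hwv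
          rw [← ieq w hwv hws]; omega
    · by_cases hxs : x = s
      · subst hxs
        refine ⟨p, hp, hpl, fun w hw hwL => ?_⟩
        rw [ias]
        by_cases hwv : w = v
        · rw [hwv, iav]; omega
        · by_cases hws : w = x
          · rw [hws, ias]
          · have h1 := hpc w hw ((hmem w).mpr hwL)
            rw [ibs] at h1
            rw [← ieq w hwv hws]
            omega
      · exact ⟨p, hp, hpl, fun w hw hwL =>
          (hcmp x w hxL ((hmem w).mpr hwL) hxv hxs).mp (hpc w hw ((hmem w).mpr hwL))⟩
  · rintro (rfl | ⟨hxL, p, hp, hpl, hpc⟩)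
    · exact Or.inl rfl
    right
    refine ⟨(hmem x).mpr hxL, ?_⟩
    by_cases hxs : x = s
    · subst hxs
      by_cases hvp : v ∈ p.support
      · exfalso
        refine hkey (p.dropUntil v hvp) (hp.dropUntil hvp)
          (le_trans (Walk.length_dropUntil_le p hvp) hpl)
          (fun w hw hwL => ?_)
        have h1 := hpc w (Walk.support_dropUntil_subset p hvp hw) ((hmem w).mp hwL)
        rw [ias] at h1
        by_cases hwv : w = v
        · rw [hwv, ibv]
        · by_cases hws : w = x
          · rw [hws, ibs]; omega
          · rw [ieq w hwv hws]; exact h1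
      · refine ⟨p, hp, hpl, fun w hw hwL => ?_⟩
        rw [ibs]
        by_cases hws : w = x
        · rw [hws, ibs]
        · have hwv : w ≠ v := fun h => hvp (h ▸ hw)
          have h1 := hpc w hw ((hmem w).mp hwL)
          rw [ias] at h1
          have h2 : La.idxOf w ≠ n := by rw [← ias]; exact hane ((hmem w).mp hwL) hsLa hws
          rw [ieq w hwv hws]; omega
    · by_cases hxv : x = v
      · subst hxv
        refine ⟨p, hp, hpl, fun w hw hwL => ?_⟩
        rw [ibv]
        by_cases hwv : w = x
        · rw [hwv, ibv]
        · by_cases hws : w = s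
          · rw [hws, ibs]; omega
          · have h1 := hpc w hw ((hmem w).mp hwL)
            rw [iav, ← ieq w hwv hws] at h1
            omega
      · exact ⟨p, hp, hpl, fun w hw hwL =>
          (hcmp x w ((hmem x).mpr hxL) hwL hxv hxs).mpr
            (hpc w hw ((hmem w).mp hwL))⟩

theorem stmt4 (G : SimpleGraph V) (r : ℕ) (LS : List V) (hLS : LS.Nodup)
    (v : V) (hv : v ∉ LS) (s : V) (hs : s ∈ LS) :
    s ∉ bp G r LS v ↔
      ∀ u, Wsub G r (placeBefore LS s v) u = Wsub G r (placeAfter LS s v) u := by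
  have hsplit : LS.dropWhile (· != s) = s :: (LS.dropWhile (· != s)).tail :=
    dropWhile_eq_cons hs
  set A := LS.takeWhile (· != s) with hA
  set B := (LS.dropWhile (· != s)).tail with hB
  have hLSeq : A ++ s :: B = LS := by
    rw [hA, hB, ← hsplit, List.takeWhile_append_dropWhile]
  have hpb : placeBefore LS s v = A ++ v :: s :: B := by
    rw [placeBefore, hsplit]
  have hpa : placeAfter LS s v = A ++ s :: v :: B := rfl
  have hnd : (v :: (A ++ s :: B)).Nodup := by
    rw [hLSeq]; exact List.nodup_cons.mpr ⟨hv, hLS⟩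
  rw [hpb, hpa]
  constructor
  · intro hbp u
    have H : Wsub G r (A ++ v :: s :: B) v = Wsub G r (A ++ s :: v :: B) v := by
      by_contra hne
      exact hbp ⟨hs, by rw [hpb, hpa]; exact hne⟩
    exact wsub_all G r A B v s hnd H u
  · intro h hbp
    exact hbp.2 (by rw [hpb, hpa]; exact h v)
end

section
/- Let G be a graph, r ∈ ℕ, L_S a subordering of S ⊆ V(G) with free vertices T = V(G)\S, and let L' be a full right extension of L_S. For u ∈ T, let X_{L'}(u) = { v ∈ T : v ≺_{L'} u }. If Wreach_r(G, L', u) ∩ X_{L'}(u) = ∅, then every path of length at most r between u and a vertex of X_{L'}(u) contains a vertex of S. -/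
open SimpleGraph

variable {V : Type*} [DecidableEq V]

theorem stmt5 (G : SimpleGraph V) (r : ℕ) (LS L' : List V)
    (hLS : LS.Nodup) (hL' : L'.Nodup) (hfull : ∀ x, x ∈ L')
    (hext : ∃ t : List V, L' = LS ++ t)
    (u : V) (hu : u ∉ LS)
    (hX : Wfull G r L' u ∩ {x | x ∉ LS ∧ L'.idxOf x < L'.idxOf u} = ∅) :
    ∀ x, x ∉ LS → L'.idxOf x < L'.idxOf u →
      ∀ p : G.Walk u x, p.IsPath → p.length ≤ r → ∃ w ∈ p.support, w ∈ LS := by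
  intro x hx hxu p hp hlen
  by_contra hcon
  push_neg at hcon
  obtain ⟨w, hwarg⟩ : ∃ w, w ∈ p.support.argmin L'.idxOf := by
    cases h : p.support.argmin L'.idxOf with
    | none => exact absurd (List.argmin_eq_none.mp h) p.support_ne_nil
    | some w => exact ⟨w, by simp [h]⟩
  have hw : w ∈ p.support := List.argmin_mem hwarg
  have hwmin : ∀ y ∈ p.support, L'.idxOf w ≤ L'.idxOf y :=
    fun y hy => List.le_of_mem_argmin hy hwarg
  refine absurd ?_ (Set.eq_empty_iff_forall_notMem.mp hX w)
  constructor
  · exact ⟨p.takeUntil w hw, hp.takeUntil hw,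
      le_trans (SimpleGraph.Walk.length_takeUntil_le p hw) hlen,
      fun y hy => hwmin y (SimpleGraph.Walk.support_takeUntil_subset p hw hy)⟩
  · exact ⟨hcon w hw, lt_of_le_of_lt (hwmin x p.end_mem_support) hxu⟩
end

section
/- Let G be a graph, r, k ∈ ℕ, and let L_S be a subordering of S ⊆ V(G) with free vertices T = V(G)\S. Suppose there exists a full right extension L' of L_S with wcol_r(G, L') ≤ k. If u ∈ T satisfies |Wreach_r(G, L_S, u)| = k, then there exists a full right extension L̄ of L_S in which u is the leftmost vertex of T and wcol_r(G, L̄) ≤ k. -/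
open SimpleGraph

variable {V : Type*} [DecidableEq V]

theorem stmt6 [Fintype V] (G : SimpleGraph V) (r k : ℕ) (LS : List V) (hLS : LS.Nodup)
    (L' : List V) (hL' : L'.Nodup) (hfull : ∀ x, x ∈ L')
    (hext : ∃ t : List V, L' = LS ++ t)
    (hw : wcolFull G r L' ≤ k)
    (u : V) (hu : u ∉ LS) (hcard : (Wsub G r LS u).ncard = k) :
    ∃ Lbar : List V, Lbar.Nodup ∧ (∀ x, x ∈ Lbar) ∧
      (∃ t : List V, Lbar = LS ++ u :: t) ∧ wcolFull G r Lbar ≤ k := by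
  classical
  obtain ⟨t, rfl⟩ := hext
  have hut : u ∈ t := by
    rcases List.mem_append.mp (hfull u) with h | h
    · exact absurd h hu
    · exact h
  obtain ⟨t₁, t₂, rfl⟩ := List.append_of_mem hut
  set n := LS.length with hn
  -- the new ordering
  have hperm : List.Perm (LS ++ (t₁ ++ u :: t₂)) (LS ++ u :: (t₁ ++ t₂)) :=
    List.Perm.append_left LS List.perm_middle
  have hndbar : (LS ++ u :: (t₁ ++ t₂)).Nodup := hperm.nodup_iff.mp hL'
  have hfullbar : ∀ x, x ∈ LS ++ u :: (t₁ ++ t₂) := fun x => hperm.mem_iff.mp (hfull x)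
  have hu12 : u ∉ t₁ ++ t₂ := by
    have h1 : (u :: (t₁ ++ t₂)).Nodup := hndbar.of_append_right
    exact (List.nodup_cons.mp h1).1
  have hu1 : u ∉ t₁ := fun h => hu12 (List.mem_append_left _ h)
  -- index computations
  have idxLS : ∀ x ∈ LS, (LS ++ (t₁ ++ u :: t₂)).idxOf x = LS.idxOf x :=
    fun x hx => List.idxOf_append_of_mem hx
  have idxLSbar : ∀ x ∈ LS, (LS ++ u :: (t₁ ++ t₂)).idxOf x = LS.idxOf x :=
    fun x hx => List.idxOf_append_of_mem hx
  have idxNLS : ∀ x, x ∉ LS →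
      (LS ++ (t₁ ++ u :: t₂)).idxOf x = n + (t₁ ++ u :: t₂).idxOf x :=
    fun x hx => List.idxOf_append_of_notMem hx
  have idxNLSbar : ∀ x, x ∉ LS →
      (LS ++ u :: (t₁ ++ t₂)).idxOf x = n + (u :: (t₁ ++ t₂)).idxOf x :=
    fun x hx => List.idxOf_append_of_notMem hx
  have hLSlt : ∀ x ∈ LS, LS.idxOf x < n := fun x hx => List.idxOf_lt_length_iff.mpr hx
  have idxU' : (LS ++ (t₁ ++ u :: t₂)).idxOf u = n + t₁.length := by
    rw [idxNLS u hu, List.idxOf_append_of_notMem hu1, List.idxOf_cons_self]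
    omega
  have idxUbar : (LS ++ u :: (t₁ ++ t₂)).idxOf u = n := by
    rw [idxNLSbar u hu, List.idxOf_cons_self]
    omega
  have hT1 : ∀ x ∈ t₁,
      (LS ++ u :: (t₁ ++ t₂)).idxOf x = (LS ++ (t₁ ++ u :: t₂)).idxOf x + 1 := by
    intro x hx
    have hxLS : x ∉ LS := by
      intro hxLS
      have := List.disjoint_of_nodup_append hL' hxLS
      exact this (List.mem_append_left _ hx)
    have hxu : u ≠ x := fun h => hu1 (h ▸ hx)
    rw [idxNLSbar x hxLS, idxNLS x hxLS, List.idxOf_cons_ne _ hxu,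
      List.idxOf_append_of_mem hx, List.idxOf_append_of_mem hx]
    omega
  have hEq : ∀ x, x ∉ t₁ → x ≠ u →
      (LS ++ u :: (t₁ ++ t₂)).idxOf x = (LS ++ (t₁ ++ u :: t₂)).idxOf x := by
    intro x h1 h2
    by_cases hx : x ∈ LS
    · rw [idxLSbar x hx, idxLS x hx]
    · have hxu : u ≠ x := Ne.symm h2
      rw [idxNLSbar x hx, idxNLS x hx, List.idxOf_cons_ne _ hxu,
        List.idxOf_append_of_notMem h1, List.idxOf_append_of_notMem h1,
        List.idxOf_cons_ne _ hxu]
      omega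
  -- transfer of the minimality condition for w ≠ u, x ≠ u
  have hTrans : ∀ w x : V, w ≠ u → x ≠ u →
      (LS ++ u :: (t₁ ++ t₂)).idxOf w ≤ (LS ++ u :: (t₁ ++ t₂)).idxOf x →
      (LS ++ (t₁ ++ u :: t₂)).idxOf w ≤ (LS ++ (t₁ ++ u :: t₂)).idxOf x := by
    intro w x hwne hxne h
    by_cases hw1 : w ∈ t₁ <;> by_cases hx1 : x ∈ t₁
    · rw [hT1 w hw1, hT1 x hx1] at h; omega
    · rw [hT1 w hw1, hEq x hx1 hxne] at h; omega
    · have hwx : w ≠ x := fun h' => hw1 (h' ▸ hx1)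
      have h' : (LS ++ u :: (t₁ ++ t₂)).idxOf w < (LS ++ u :: (t₁ ++ t₂)).idxOf x :=
        lt_of_le_of_ne h
          (fun h' => hwx ((List.idxOf_inj (hfullbar w)).mp h'))
      rw [hEq w hw1 hwne, hT1 x hx1] at h'
      omega
    · rw [hEq w hw1 hwne, hEq x hx1 hxne] at h; exact h
  -- Wsub LS u ⊆ Wfull L' u, hence equality by cardinality
  have hNLSge : ∀ x, x ∉ LS → n ≤ (LS ++ (t₁ ++ u :: t₂)).idxOf x := by
    intro x hx; rw [idxNLS x hx]; omega
  have hw2 : ∀ v' : V, (Wfull G r (LS ++ (t₁ ++ u :: t₂)) v').ncard ≤ k := by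
    intro v'
    unfold wcolFull at hw
    exact le_trans
      (Finset.le_sup (f := fun v => (Wfull G r (LS ++ (t₁ ++ u :: t₂)) v).ncard)
        (Finset.mem_univ v')) hw
  have hsub : Wsub G r LS u ⊆ Wfull G r (LS ++ (t₁ ++ u :: t₂)) u := by
    rintro w (rfl | ⟨hwLS, p, hp, hl, hmin⟩)
    · exact ⟨Walk.nil, by simp, by simp, by simp⟩
    · refine ⟨p, hp, hl, fun x hx => ?_⟩
      by_cases hxLS : x ∈ LS
      · rw [idxLS _ hwLS, idxLS _ hxLS]; exact hmin x hx hxLS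
      · have h1 := hNLSge x hxLS
        have h2 := hLSlt w hwLS
        rw [idxLS _ hwLS]; omega
  have hWfu : Wfull G r (LS ++ (t₁ ++ u :: t₂)) u = Wsub G r LS u := by
    refine (Set.eq_of_subset_of_ncard_le hsub ?_).symm
    rw [hcard]
    exact hw2 u
  -- the main inclusion
  have hsubset : ∀ v, Wfull G r (LS ++ u :: (t₁ ++ t₂)) v ⊆
      Wfull G r (LS ++ (t₁ ++ u :: t₂)) v := by
    rintro v w ⟨p, hp, hl, hmin⟩
    by_cases hwu : w = u
    · subst hwu
      have hsupLS : ∀ x ∈ p.support, x ∉ LS := by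
        intro x hx hxLS
        have h1 := hmin x hx
        rw [idxUbar, idxLSbar x hxLS] at h1
        exact absurd h1 (Nat.not_le.mpr (hLSlt x hxLS))
      obtain ⟨m, hm, hmmin⟩ := Finset.exists_min_image p.support.toFinset
        (fun x => (LS ++ (t₁ ++ w :: t₂)).idxOf x)
        ⟨v, List.mem_toFinset.mpr p.start_mem_support⟩
      have hm' : m ∈ p.support := List.mem_toFinset.mp hm
      have hmrev : m ∈ p.reverse.support := by
        rw [Walk.support_reverse]; exact List.mem_reverse.mpr hm'
      have hmW : m ∈ Wfull G r (LS ++ (t₁ ++ w :: t₂)) w := by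
        refine ⟨p.reverse.takeUntil m hmrev, hp.reverse.takeUntil hmrev,
          le_trans (Walk.length_takeUntil_le _ hmrev)
            (by rw [Walk.length_reverse]; exact hl), fun x hx => ?_⟩
        refine hmmin x (List.mem_toFinset.mpr ?_)
        have h1 := Walk.support_takeUntil_subset _ hmrev hx
        rw [Walk.support_reverse] at h1
        exact List.mem_reverse.mp h1
      rw [hWfu] at hmW
      have hmu : m = w := by
        rcases hmW with h | ⟨hmLS, _⟩
        · exact h
        · exact absurd hmLS (hsupLS m hm')
      subst hmu
      exact ⟨p, hp, hl, fun x hx => hmmin x (List.mem_toFinset.mpr hx)⟩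
    · refine ⟨p, hp, hl, fun x hx => ?_⟩
      by_cases hxu : x = u
      · have h1 := hmin x hx
        rw [hxu, idxUbar] at h1
        have hwLS : w ∈ LS := by
          by_contra hwLS
          have h2 := idxNLSbar w hwLS
          have hune : u ≠ w := Ne.symm hwu
          rw [List.idxOf_cons_ne _ hune] at h2
          omega
        rw [hxu, idxLS w hwLS, idxU']
        have := hLSlt w hwLS
        omega
      · exact hTrans w x hwu hxu (hmin x hx)
  refine ⟨LS ++ u :: (t₁ ++ t₂), hndbar, hfullbar, ⟨t₁ ++ t₂, rfl⟩, ?_⟩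
  unfold wcolFull
  refine Finset.sup_le fun v _ => ?_
  exact le_trans (Set.ncard_le_ncard (hsubset v)) (hw2 v)
end

section
/- Let G be a graph and r ∈ ℕ. Let L_S be a subordering of S ⊆ V(G) with free vertex set T = V(G)\S, and let L_{S'} be a left extension of L_S, i.e., S ⊆ S' ⊆ V(G), L_{S'} restricted to S equals L_S, and every vertex of S'\S precedes every vertex of S in L_{S'}. Then for all v ∈ S, PotSreach_r(G, L_S, v) ⊆ PotSreach_r(G, L_{S'}, v). -/
open SimpleGraph

variable {V : Type*} [DecidableEq V]

/-- `u` is potentially strongly `r`-reachable from `v` w.r.t. the subordering `L`: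
either `u ∈ Wreach_r(G[S], L, v)` (paths staying inside the ordered set `S`), or there is
a path of length at most `r` from `v` to `u` whose only free vertex is `u` itself. -/
def PotSreach (G : SimpleGraph V) (r : ℕ) (L : List V) (v : V) : Set V :=
  {u | (u ∈ L ∧ ∃ p : G.Walk v u, p.IsPath ∧ p.length ≤ r ∧
        (∀ w ∈ p.support, w ∈ L) ∧ ∀ w ∈ p.support, L.idxOf u ≤ L.idxOf w) ∨
       (u ∉ L ∧ ∃ p : G.Walk v u, p.IsPath ∧ p.length ≤ r ∧ ∀ w ∈ p.support, w ≠ u → w ∈ L)}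

theorem stmt7 (G : SimpleGraph V) (r : ℕ) (LS LS' : List V)
    (hLS : LS.Nodup) (hLS' : LS'.Nodup)
    (hext : ∃ t : List V, LS' = t ++ LS) :
    ∀ v ∈ LS, PotSreach G r LS v ⊆ PotSreach G r LS' v := by
  obtain ⟨t, rfl⟩ := hext
  have hdisj : ∀ x ∈ LS, x ∉ t := by
    rw [List.nodup_append] at hLS'
    exact fun x hx hxt => hLS'.2.2 x hxt x hx rfl
  have hidx : ∀ x ∈ LS, (t ++ LS).idxOf x = t.length + LS.idxOf x := by
    intro x hx
    exact List.idxOf_append_of_notMem (hdisj x hx)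
  intro v hv u hu
  rcases hu with ⟨huL, p, hp, hlen, hsupp, hord⟩ | ⟨huL, p, hp, hlen, hsupp⟩
  · left
    refine ⟨List.mem_append_right _ huL, p, hp, hlen, fun w hw => List.mem_append_right _ (hsupp w hw), fun w hw => ?_⟩
    rw [hidx u huL, hidx w (hsupp w hw)]
    exact Nat.add_le_add_left (hord w hw) _
  · by_cases hut : u ∈ t
    · left
      refine ⟨List.mem_append_left _ hut, p, hp, hlen, fun w hw => ?_, fun w hw => ?_⟩
      · by_cases hwu : w = u
        · exact hwu ▸ List.mem_append_left _ hut
        · exact List.mem_append_right _ (hsupp w hw hwu)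
      · by_cases hwu : w = u
        · rw [hwu]
        · have hwL := hsupp w hw hwu
          rw [hidx w hwL]
          calc (t ++ LS).idxOf u = t.idxOf u := List.idxOf_append_of_mem hut
            _ ≤ t.length := (List.idxOf_lt_length_iff.mpr hut).le
            _ ≤ t.length + LS.idxOf w := Nat.le_add_right _ _
    · right
      refine ⟨fun h => ?_, p, hp, hlen, fun w hw hwu => List.mem_append_right _ (hsupp w hw hwu)⟩
      rcases List.mem_append.mp h with h | h
      · exact hut h
      · exact huL h
end
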